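/- With q = 1-p and 1/2 < p < 1, the willingness to pay W(p,2n) = \sum_{k=n+1}^{2n} C(2n,k)(p^k q^{2n+1-k} - p^{2n+1-k} q^k) is strictly increasing in n: W(p, 2m) > W(p, 2n) whenever m > n ≥ 1. -/

import Mathlib

open Finset

private lemma sum_shift (f : ℕ → ℝ) (a b : ℕ) :
    ∑ k ∈ Icc (a+1) (b+1), f k = ∑ k ∈ Icc a b, f (k+1) := by
  rw [← Finset.map_add_right_Icc, Finset.sum_map]
  rfl

private lemma sum_Icc_bot (f : ℕ → ℝ) (a b : ℕ) (h : a ≤ b) :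
    ∑ k ∈ Icc a b, f k = f a + ∑ k ∈ Icc (a+1) b, f k := by
  have he : Icc a b = insert a (Icc (a+1) b) := by
    ext x; simp only [Finset.mem_Icc, Finset.mem_insert]; omega
  rw [he, Finset.sum_insert (by simp [Finset.mem_Icc])]

private noncomputable def Wfun (p : ℝ) (n : ℕ) : ℝ :=
  ∑ k ∈ Finset.Icc (n+1) (2*n), ((2*n).choose k : ℝ) *
    (p ^ k * (1-p) ^ (2*n+1-k) - p ^ (2*n+1-k) * (1-p) ^ k)

private lemma Wstep (p : ℝ) (n : ℕ) (hn : 1 ≤ n) :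
    Wfun p (n+1) = Wfun p n
      + (p - (1-p)) * (((2*n).choose n : ℝ) + ((2*n).choose (n+1) : ℝ)) * (p*(1-p))^(n+1) := by
  obtain ⟨n₀, rfl⟩ : ∃ n₀, n = n₀ + 1 := ⟨n - 1, by omega⟩
  set n := n₀ + 1 with hnd
  set g : ℕ → ℝ := fun k => p ^ k * (1-p) ^ (2*n+1-k) - p ^ (2*n+1-k) * (1-p) ^ k with hg
  set c : ℕ → ℝ := fun k => ((2*n).choose k : ℝ) with hc
  -- Step 1: reindex W(n+1)
  have h1 : Wfun p (n+1)
      = ∑ j ∈ Icc (n+1) (2*n+1),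
          (c (j-1) + 2 * c j + c (j+1)) * (p*(1-p)* g j) := by
    rw [Wfun]
    have h2 : 2*(n+1) = (2*n+1)+1 := by ring
    rw [show (n+1+1) = (n+1)+1 from rfl, h2, sum_shift]
    refine Finset.sum_congr rfl ?_
    intro j hj
    simp only [Finset.mem_Icc] at hj
    obtain ⟨j', rfl⟩ : ∃ j', j = j' + 1 := ⟨j - 1, by omega⟩
    have hgsh : p ^ (j'+1+1) * (1-p) ^ ((2*n+1)+1+1-(j'+1+1)) -
        p ^ ((2*n+1)+1+1-(j'+1+1)) * (1-p) ^ (j'+1+1) = p*(1-p) * g (j'+1) := by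
      have he : (2*n+1)+1+1-(j'+1+1) = (2*n+1-(j'+1)) + 1 := by omega
      rw [he, hg]
      simp only [pow_succ]
      ring
    have hch : (((2*n+1)+1).choose (j'+1+1) : ℝ)
        = c j' + 2 * c (j'+1) + c (j'+1+1) := by
      rw [hc]
      simp only [Nat.choose_succ_succ, Nat.succ_eq_add_one]
      push_cast
      ring
    rw [hgsh, hch]
    simp only [Nat.add_sub_cancel]
  -- split into three sums
  have hsplit : Wfun p (n+1)
      = (∑ j ∈ Icc (n+1) (2*n+1), c (j-1) * (p*(1-p)*g j))
        + 2 * (p*(1-p)) * (∑ j ∈ Icc (n+1) (2*n+1), c j * g j)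
        + (∑ j ∈ Icc (n+1) (2*n+1), c (j+1) * (p*(1-p)*g j)) := by
    rw [h1, Finset.mul_sum]
    rw [← Finset.sum_add_distrib, ← Finset.sum_add_distrib]
    refine Finset.sum_congr rfl fun j hj => by ring
  -- T2 = W n
  have hT2 : ∑ j ∈ Icc (n+1) (2*n+1), c j * g j = Wfun p n := by
    rw [Finset.sum_Icc_succ_top (show n+1 ≤ 2*n+1 by omega)]
    have hz : (2*n).choose (2*n+1) = 0 := Nat.choose_eq_zero_of_lt (by omega)
    have : c (2*n+1) = 0 := by simp [hc, hz]
    rw [this, zero_mul, add_zero, Wfun]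
  -- T1
  have hT1 : ∑ j ∈ Icc (n+1) (2*n+1), c (j-1) * (p*(1-p)*g j)
      = c n * (p*(1-p)*g (n+1)) + c (n+1) * (p*(1-p)*g (n+2))
        + ∑ k ∈ Icc (n+2) (2*n), c k * (p*(1-p)*g (k+1)) := by
    rw [show (2*n+1) = (2*n)+1 from rfl, sum_shift (fun j => c (j-1) * (p*(1-p)*g j))]
    simp only [Nat.add_sub_cancel]
    rw [sum_Icc_bot _ n (2*n) (show n ≤ 2*n by omega), sum_Icc_bot _ (n+1) (2*n) (show n+1 ≤ 2*n by omega)]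
    ring
  -- T3
  have hT3 : ∑ j ∈ Icc (n+1) (2*n+1), c (j+1) * (p*(1-p)*g j)
      = ∑ k ∈ Icc (n+2) (2*n), c k * (p*(1-p)*g (k-1)) := by
    have : ∑ j ∈ Icc (n+1) (2*n+1), c (j+1) * (p*(1-p)*g j)
        = ∑ k ∈ Icc (n+2) (2*n+2), c k * (p*(1-p)*g (k-1)) := by
      rw [show (2*n+2) = (2*n+1)+1 from rfl, sum_shift (fun k => c k * (p*(1-p)*g (k-1)))]
      simp only [Nat.add_sub_cancel]
    rw [this, show (2*n+2) = (2*n+1)+1 from rfl,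
      Finset.sum_Icc_succ_top (show n+2 ≤ (2*n+1)+1 by omega),
      show (2*n+1) = (2*n)+1 from rfl,
      Finset.sum_Icc_succ_top (show n+2 ≤ 2*n+1 by omega)]
    have ha : (2*n).choose (2*n+1) = 0 := Nat.choose_eq_zero_of_lt (by omega)
    have hb : (2*n).choose (2*n+1+1) = 0 := Nat.choose_eq_zero_of_lt (by omega)
    have hz1 : c (2*n+1) = 0 := by simp [hc, ha]
    have hz2 : c (2*n+1+1) = 0 := by simp [hc, hb]
    rw [hz1, hz2]
    ring
  -- middle combination: for k in [n+2, 2n]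
  have hmid : ∀ k ∈ Icc (n+2) (2*n),
      c k * (p*(1-p)*g (k+1)) + c k * (p*(1-p)*g (k-1))
        = (p^2 + (1-p)^2) * (c k * g k) := by
    intro k hk
    simp only [Finset.mem_Icc] at hk
    obtain ⟨a, rfl⟩ : ∃ a, k = a + 2 := ⟨k - 2, by omega⟩
    obtain ⟨b, hb⟩ : ∃ b, 2*n+1-(a+2) = b + 1 := ⟨2*n-(a+2), by omega⟩
    have e1 : 2*n+1-(a+2+1) = b := by omega
    have e2 : 2*n+1-(a+2-1) = b + 2 := by omega
    have e3 : a+2-1 = a+1 := by omega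
    have e4 : 2*n+1-(a+1) = b + 2 := by omega
    rw [hg]
    simp only [e3, e1, e2, e4, hb]
    simp only [pow_succ]
    ring
  have hmidsum : (∑ k ∈ Icc (n+2) (2*n), c k * (p*(1-p)*g (k+1)))
      + (∑ k ∈ Icc (n+2) (2*n), c k * (p*(1-p)*g (k-1)))
      = (p^2 + (1-p)^2) * (Wfun p n - c (n+1) * g (n+1)) := by
    rw [← Finset.sum_add_distrib, Finset.sum_congr rfl hmid, ← Finset.mul_sum]
    congr 1
    have := sum_Icc_bot (fun k => c k * g k) (n+1) (2*n) (by omega)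
    rw [← Wfun] at this
    · rw [this]; ring
  -- boundary values of g
  have hG1 : g (n+1) = p^(n+1) * (1-p)^n - p^n * (1-p)^(n+1) := by
    rw [hg]; simp only [show 2*n+1-(n+1) = n from by omega]
  have hG2 : g (n+2) = p^(n+2) * (1-p)^n₀ - p^n₀ * (1-p)^(n+2) := by
    rw [hg]; simp only [show 2*n+1-(n+2) = n₀ from by omega]
  -- assemble
  rw [hsplit, hT1, hT3, hT2]
  have : (c n * (p*(1-p)*g (n+1)) + c (n+1) * (p*(1-p)*g (n+2))
        + ∑ k ∈ Icc (n+2) (2*n), c k * (p*(1-p)*g (k+1)))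
        + 2 * (p*(1-p)) * Wfun p n
        + ∑ k ∈ Icc (n+2) (2*n), c k * (p*(1-p)*g (k-1))
      = 2 * (p*(1-p)) * Wfun p n + (p^2 + (1-p)^2) * (Wfun p n - c (n+1) * g (n+1))
        + (c n * (p*(1-p)*g (n+1)) + c (n+1) * (p*(1-p)*g (n+2))) := by
    rw [← hmidsum]; ring
  rw [this, hG1, hG2]
  have hcn : c n = ((2*n).choose n : ℝ) := rfl
  have hcn1 : c (n+1) = ((2*n).choose (n+1) : ℝ) := rfl
  rw [hcn, hcn1, hnd, mul_pow]
  ring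

private lemma Wstep_lt (p : ℝ) (hp : 1/2 < p) (hp1 : p < 1) (n : ℕ) (hn : 1 ≤ n) :
    Wfun p n < Wfun p (n+1) := by
  rw [Wstep p n hn]
  have h1 : (0:ℝ) < p - (1-p) := by linarith
  have h2 : (0:ℝ) < ((2*n).choose n : ℝ) + ((2*n).choose (n+1) : ℝ) := by
    have : 0 < (2*n).choose n := Nat.choose_pos (by omega)
    have h3 : (0:ℝ) < ((2*n).choose n : ℝ) := by exact_mod_cast this
    have h4 : (0:ℝ) ≤ ((2*n).choose (n+1) : ℝ) := by positivity
    linarith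
  have h5 : (0:ℝ) < (p*(1-p))^(n+1) := by
    have : (0:ℝ) < p * (1-p) := by nlinarith
    positivity
  nlinarith [mul_pos (mul_pos h1 h2) h5]

/-- `W(p,2n)` is strictly increasing in `n`: `W(p,2m) > W(p,2n)` whenever `m > n ≥ 1`. -/
theorem stmt_2 (p : ℝ) (hp : 1/2 < p) (hp1 : p < 1) (m n : ℕ) (hn : 1 ≤ n) (hmn : n < m) :
    (∑ k ∈ Finset.Icc (n+1) (2*n),
      (Nat.choose (2*n) k : ℝ) *
        (p ^ k * (1-p) ^ (2*n+1-k) - p ^ (2*n+1-k) * (1-p) ^ k))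
    < ∑ k ∈ Finset.Icc (m+1) (2*m),
      (Nat.choose (2*m) k : ℝ) *
        (p ^ k * (1-p) ^ (2*m+1-k) - p ^ (2*m+1-k) * (1-p) ^ k) := by
  show Wfun p n < Wfun p m
  induction m, hmn using Nat.le_induction with
  | base => exact Wstep_lt p hp hp1 n hn
  | succ m hm ih => exact ih.trans (Wstep_lt p hp hp1 m (by omega))
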